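/- For n ≥ 1, every complex number z₀ satisfying 3n²z₀^{2n} + n(n+5)z₀^n + 2 = 0 is a fixed point of C_n, and the extraneous fixed points of C_n are exactly the solutions of z^n = (-(n+5) + √(n²+10n+1))/(6n) or z^n = (-(n+5) - √(n²+10n+1))/(6n); in particular there are exactly 2n extraneous fixed points. -/

import Mathlib

/-- The rational map given by the Chebyshev's method applied to `z·e^{z^n}`. -/
noncomputable def Cn (n : ℕ) (z : ℂ) : ℂ :=
  (n:ℂ) * z^(n+1) * (2*(n:ℂ)^2*z^(2*n) + 3*(n:ℂ)*z^n - (n:ℂ) + 1) /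
    (2 * ((n:ℂ)*z^n + 1)^3)

/-- The set of `n`-th roots of a nonzero complex number has `n` elements. -/
lemma ncard_nth_roots (n : ℕ) (hn : 1 ≤ n) (r : ℂ) (hr : r ≠ 0) :
    {z : ℂ | z ^ n = r}.ncard = n := by
  have hn0 : 0 < n := hn
  have hsep : (Polynomial.X ^ n - Polynomial.C r : Polynomial ℂ).Separable :=
    Polynomial.separable_X_pow_sub_C r (by exact_mod_cast Nat.cast_ne_zero.mpr hn0.ne') hr
  have hnodup : (Polynomial.nthRoots n r).Nodup := Polynomial.nodup_roots hsep
  have hcard : Multiset.card (Polynomial.nthRoots n r) = n := by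
    have hprim := Complex.isPrimitiveRoot_exp n hn0.ne'
    rw [hprim.card_nthRoots]
    have : ∃ α : ℂ, α ^ n = r := by
      exact IsAlgClosed.exists_pow_nat_eq r hn0
    simp [this]
  have hset : {z : ℂ | z ^ n = r} = ((Polynomial.nthRoots n r).toFinset : Set ℂ) := by
    ext z
    simp [Polynomial.mem_nthRoots hn0]
  rw [hset, Set.ncard_coe_finset, Multiset.toFinset_card_of_nodup hnodup, hcard]

/-- Every solution of `3n²z^{2n} + n(n+5)z^n + 2 = 0` is a fixed point of `C_n`;
the extraneous (nonzero finite) fixed points of `C_n` are exactly the solutions of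
`z^n = (-(n+5) ± √(n²+10n+1))/(6n)`, and there are exactly `2n` of them. -/
theorem Cn_extraneous_fixed_points (n : ℕ) (hn : 1 ≤ n) :
    (∀ z₀ : ℂ, 3*(n:ℂ)^2*z₀^(2*n) + (n:ℂ)*((n:ℂ)+5)*z₀^n + 2 = 0 → Cn n z₀ = z₀) ∧
    (∀ z : ℂ, z ≠ 0 →
      (Cn n z = z ↔
        z^n = (-(((n:ℂ))+5) + (Real.sqrt ((n:ℝ)^2 + 10*n + 1) : ℂ)) / (6*(n:ℂ)) ∨
        z^n = (-(((n:ℂ))+5) - (Real.sqrt ((n:ℝ)^2 + 10*n + 1) : ℂ)) / (6*(n:ℂ)))) ∧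
    {z : ℂ | z ≠ 0 ∧ Cn n z = z}.ncard = 2*n := by
  have hn0 : 0 < n := hn
  have hN : (n:ℂ) ≠ 0 := Nat.cast_ne_zero.mpr hn0.ne'
  set s : ℝ := Real.sqrt ((n:ℝ)^2 + 10*n + 1) with hs
  have hargpos : (0:ℝ) < (n:ℝ)^2 + 10*n + 1 := by positivity
  have hspos : 0 < s := Real.sqrt_pos.mpr hargpos
  have hS2 : ((s:ℂ))^2 = (n:ℂ)^2 + 10*(n:ℂ) + 1 := by
    rw [← Complex.ofReal_pow, Real.sq_sqrt hargpos.le]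
    push_cast
    ring
  set r₁ : ℂ := (-(((n:ℂ))+5) + (s:ℂ)) / (6*(n:ℂ)) with hr₁
  set r₂ : ℂ := (-(((n:ℂ))+5) - (s:ℂ)) / (6*(n:ℂ)) with hr₂
  -- factorization of the quadratic
  have hfact : ∀ w : ℂ, 3*(n:ℂ)^2*w^2 + (n:ℂ)*((n:ℂ)+5)*w + 2
      = 3*(n:ℂ)^2 * (w - r₁) * (w - r₂) := by
    intro w
    rw [hr₁, hr₂]
    field_simp
    linear_combination 3 * hS2
  -- quadratic iff roots
  have hquad : ∀ z : ℂ, (3*(n:ℂ)^2*z^(2*n) + (n:ℂ)*((n:ℂ)+5)*z^n + 2 = 0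
      ↔ z^n = r₁ ∨ z^n = r₂) := by
    intro z
    have h2n : z^(2*n) = (z^n)^2 := by rw [mul_comm, pow_mul]
    rw [h2n, hfact]
    constructor
    · intro h
      rcases mul_eq_zero.mp h with h' | h'
      · rcases mul_eq_zero.mp h' with h'' | h''
        · exfalso
          rcases mul_eq_zero.mp h'' with h3 | h3
          · norm_num at h3
          · exact hN (pow_eq_zero_iff (by norm_num : (2:ℕ) ≠ 0) |>.mp h3)
        · exact Or.inl (sub_eq_zero.mp h'')
      · exact Or.inr (sub_eq_zero.mp h')
    · rintro (h | h) <;> rw [h] <;> ring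
  -- roots are nonzero
  have hr₁0 : r₁ ≠ 0 := by
    intro h
    have := hfact 0
    rw [h] at this
    simp at this
  have hr₂0 : r₂ ≠ 0 := by
    intro h
    have := hfact 0
    rw [h] at this
    simp at this
  -- fixed point iff quadratic, for z ≠ 0
  have hfix : ∀ z : ℂ, z ≠ 0 → (Cn n z = z ↔
      3*(n:ℂ)^2*z^(2*n) + (n:ℂ)*((n:ℂ)+5)*z^n + 2 = 0) := by
    intro z hz
    have h2n : z^(2*n) = (z^n)^2 := by rw [mul_comm, pow_mul]
    have hzn1 : z^(n+1) = z^n * z := by ring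
    by_cases hd : (n:ℂ)*z^n + 1 = 0
    · -- denominator vanishes: Cn z = 0 ≠ z, and quadratic ≠ 0
      have hCn : Cn n z = 0 := by
        rw [Cn, hd]
        simp
      constructor
      · intro h; exact absurd (hCn ▸ h.symm) hz
      · intro h
        exfalso
        have e : (n:ℂ)*z^n = -1 := by linear_combination hd
        rw [h2n] at h
        have e2 : (n:ℂ) = 0 := by
          linear_combination -h + (3*(n:ℂ)*z^n - 3 + (n:ℂ) + 5) * e
        exact hN e2
    · rw [Cn, div_eq_iff (by
        intro h
        rcases mul_eq_zero.mp h with h' | h'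
        · norm_num at h'
        · exact hd (pow_eq_zero_iff (n := 3) (by norm_num) |>.mp h'))]
      constructor
      · intro h
        have h' : (n:ℂ) * z^n * (2*(n:ℂ)^2*z^(2*n) + 3*(n:ℂ)*z^n - (n:ℂ) + 1)
            - 2*((n:ℂ)*z^n+1)^3 = 0 := by
          have := h
          rw [hzn1] at this
          have hz' := mul_right_cancel₀ hz (by linear_combination this :
            ((n:ℂ) * (z^n) * (2*(n:ℂ)^2*z^(2*n) + 3*(n:ℂ)*z^n - (n:ℂ) + 1)) * z
              = (2*((n:ℂ)*z^n+1)^3) * z)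
          linear_combination hz'
        rw [h2n] at h' ⊢
        linear_combination -h'
      · intro h
        rw [h2n] at h ⊢
        rw [hzn1]
        linear_combination z * (-h)
  refine ⟨?_, ?_, ?_⟩
  · intro z₀ h
    have hz₀ : z₀ ≠ 0 := by
      intro h0
      rw [h0] at h
      simp [zero_pow, hn0.ne', (by omega : 2*n ≠ 0)] at h
    exact (hfix z₀ hz₀).mpr h
  · intro z hz
    rw [hfix z hz, hquad z]
  · have hset : {z : ℂ | z ≠ 0 ∧ Cn n z = z}
        = {z : ℂ | z^n = r₁} ∪ {z : ℂ | z^n = r₂} := by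
      ext z
      simp only [Set.mem_setOf_eq, Set.mem_union]
      constructor
      · rintro ⟨hz, hfz⟩
        exact (hquad z).mp ((hfix z hz).mp hfz)
      · intro h
        have hz : z ≠ 0 := by
          intro h0
          rw [h0] at h
          rw [zero_pow hn0.ne'] at h
          rcases h with h | h
          · exact hr₁0 h.symm
          · exact hr₂0 h.symm
        exact ⟨hz, (hfix z hz).mpr ((hquad z).mpr h)⟩
    have hne : r₁ ≠ r₂ := by
      intro h
      rw [hr₁, hr₂, div_eq_div_iff (by simpa using hN) (by simpa using hN)] at h
      have : (s:ℂ) = 0 := by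
        field_simp at h
        linear_combination h/2
      simp only [Complex.ofReal_eq_zero] at this
      exact hspos.ne' this
    have hdisj : Disjoint {z : ℂ | z^n = r₁} {z : ℂ | z^n = r₂} := by
      rw [Set.disjoint_left]
      intro z h1 h2
      exact hne (h1.symm.trans h2)
    have hf : ∀ r : ℂ, {z : ℂ | z^n = r}.Finite := by
      intro r
      have : {z : ℂ | z^n = r} = ((Polynomial.nthRoots n r).toFinset : Set ℂ) := by
        ext z
        simp [Polynomial.mem_nthRoots hn0]
      rw [this]
      exact (Polynomial.nthRoots n r).toFinset.finite_toSet
    rw [hset, Set.ncard_union_eq hdisj (hf r₁) (hf r₂),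
      ncard_nth_roots n hn r₁ hr₁0, ncard_nth_roots n hn r₂ hr₂0]
    omega
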